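/- For any two distinct permutations φ ≠ ψ of {1,…,n}, the topological interiors (in ℝⁿ) of D_{b,φ} and D_{b,ψ} are disjoint. -/

import Mathlib

/-- The Freudenthal cell `D_{b,φ} = {x : 0 ≤ x_{φ(1)} - b_{φ(1)} ≤ ⋯ ≤ x_{φ(n)} - b_{φ(n)} ≤ h}`
of the cube with corner `b` and edge length `h`, associated to the permutation `φ`. -/
def freudenthalCell {n : ℕ} (h : ℝ) (b : EuclideanSpace ℝ (Fin n)) (φ : Equiv.Perm (Fin n)) :
    Set (EuclideanSpace ℝ (Fin n)) :=
  {x | (∀ i : Fin n, 0 ≤ x (φ i) - b (φ i) ∧ x (φ i) - b (φ i) ≤ h) ∧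
    ∀ i j : Fin n, i ≤ j → x (φ i) - b (φ i) ≤ x (φ j) - b (φ j)}

/-- At an interior point of a Freudenthal cell, the defining inequalities are strict. -/
lemma freudenthalCell_interior_strict {n : ℕ} (h : ℝ) (b : EuclideanSpace ℝ (Fin n))
    (φ : Equiv.Perm (Fin n)) {x : EuclideanSpace ℝ (Fin n)}
    (hx : x ∈ interior (freudenthalCell h b φ)) :
    StrictMono (fun i : Fin n => x (φ i) - b (φ i)) := by
  rw [mem_interior_iff_mem_nhds, Metric.mem_nhds_iff] at hx
  obtain ⟨ε, hε, hball⟩ := hx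
  intro i j hij
  set e : EuclideanSpace ℝ (Fin n) := EuclideanSpace.single (φ i) (ε / 2) with he
  have hx' : x + e ∈ freudenthalCell h b φ := by
    apply hball
    have hd : dist (x + e) x = ‖e‖ := by
      rw [dist_eq_norm, add_sub_cancel_left]
    rw [Metric.mem_ball, hd, he, EuclideanSpace.norm_single, Real.norm_eq_abs,
      abs_of_pos (by linarith)]
    linarith
  have hmono := hx'.2 i j hij.le
  have hij' : φ i ≠ φ j := fun hc => hij.ne (φ.injective hc)
  have h1 : (x + e) (φ i) = x (φ i) + ε / 2 := by
    simp [he, EuclideanSpace.single_apply]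
  have h2 : (x + e) (φ j) = x (φ j) := by
    simp [he, EuclideanSpace.single_apply, hij'.symm]
  rw [h1, h2] at hmono
  simp only
  linarith

/-- Distinct Freudenthal cells of the same cube have disjoint topological interiors. -/
theorem freudenthalCell_interior_disjoint {n : ℕ} (hn : 1 ≤ n) (h : ℝ) (hh : 0 < h)
    (b : EuclideanSpace ℝ (Fin n)) (φ ψ : Equiv.Perm (Fin n)) (hne : φ ≠ ψ) :
    interior (freudenthalCell h b φ) ∩ interior (freudenthalCell h b ψ) = ∅ := by
  by_contra hc
  obtain ⟨x, hxφ, hxψ⟩ := Set.nonempty_iff_ne_empty.2 hc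
  set f : Fin n → ℝ := fun k => x k - b k with hf
  have hφ : StrictMono (f ∘ φ) := freudenthalCell_interior_strict h b φ hxφ
  have hψ : StrictMono (f ∘ ψ) := freudenthalCell_interior_strict h b ψ hxψ
  have hrange : Set.range (f ∘ φ) = Set.range (f ∘ ψ) := by
    rw [Set.range_comp, Set.range_comp, φ.surjective.range_eq, ψ.surjective.range_eq]
  have heq : f ∘ φ = f ∘ ψ := (hφ.range_inj hψ).1 hrange
  have hfinj : Function.Injective f := by
    intro a b' hab
    have h2 : (f ∘ φ) (φ.symm a) = (f ∘ φ) (φ.symm b') := by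
      simp [Function.comp, hab]
    simpa using hφ.injective h2
  exact hne (Equiv.ext fun i => hfinj (congrFun heq i))
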